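/- Let d ≥ 2 and let (v,M) ∈ ℂ^d ⊕ so(d,ℂ) satisfy: v_j = 0 for 1 ≤ j ≤ d−1, v_d ≠ 0, M_{j,j+1} ≠ 0 for all 1 ≤ j ≤ d−1, and M_{j,k} = 0 for all k > j+1. If A ∈ O_d(ℂ) satisfies A v = v and A M Aᵀ = M, then A is the identity matrix. (The stabilizer in O_d(ℂ) of any point of the generic part of the relative section is trivial; hence the action of O_d(ℂ) is free on the invariant open set U_d(ℂ).) -/
import Mathlib


open Matrix

/-- the stabilizer in `O_d(ℂ)` of any point of the generic part of the
relative section is trivial: if `A ∈ O_d(ℂ)` fixes such a point `(v, M)`, then `A = 1`.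
(0-based indices.) -/
theorem stmt13 {d : ℕ} (hd : 2 ≤ d)
    (v : Fin d → ℂ) (M : Matrix (Fin d) (Fin d) ℂ) (hMskew : Mᵀ = -M)
    (hv1 : ∀ j : Fin d, (j : ℕ) + 1 < d → v j = 0)
    (hv2 : v ⟨d - 1, by omega⟩ ≠ 0)
    (hM1 : ∀ j k : Fin d, (k : ℕ) = (j : ℕ) + 1 → M j k ≠ 0)
    (hM2 : ∀ j k : Fin d, (j : ℕ) + 1 < (k : ℕ) → M j k = 0)
    (A : Matrix (Fin d) (Fin d) ℂ) (hA : A * Aᵀ = 1)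
    (hAv : A.mulVec v = v) (hAM : A * M * Aᵀ = M) :
    A = 1 := by
  have hAtA : Aᵀ * A = 1 := mul_eq_one_comm.mp hA
  have hcomm : A * M = M * A := by
    calc A * M = A * M * (Aᵀ * A) := by rw [hAtA, mul_one]
    _ = (A * M * Aᵀ) * A := by rw [mul_assoc (A * M)]
    _ = M * A := by rw [hAM]
  have hpow : ∀ m : ℕ, A * M ^ m = M ^ m * A := by
    intro m
    induction m with
    | zero => simp
    | succ n ih =>
      rw [pow_succ, ← mul_assoc, ih, mul_assoc, hcomm, ← mul_assoc]
  have hfix : ∀ m : ℕ, A.mulVec ((M ^ m).mulVec v) = (M ^ m).mulVec v := by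
    intro m
    rw [mulVec_mulVec, hpow, ← mulVec_mulVec, hAv]
  -- key triangularity facts about M^m *ᵥ v
  have key : ∀ m : ℕ, (∀ j : Fin d, (j : ℕ) + m + 1 < d → ((M ^ m).mulVec v) j = 0) ∧
      (m < d → ((M ^ m).mulVec v) ⟨d - 1 - m, by omega⟩ ≠ 0) := by
    intro m
    induction m with
    | zero =>
      constructor
      · intro j hj
        simpa using hv1 j (by omega)
      · intro _
        simpa using hv2
    | succ n ih =>
      have hstep : (M ^ (n + 1)).mulVec v = M.mulVec ((M ^ n).mulVec v) := by
        rw [pow_succ', ← mulVec_mulVec]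
      constructor
      · intro j hj
        rw [hstep]
        show ∑ k, M j k * ((M ^ n).mulVec v) k = 0
        apply Finset.sum_eq_zero
        intro k _
        by_cases hk : (k : ℕ) + n + 1 < d
        · rw [ih.1 k hk, mul_zero]
        · rw [hM2 j k (by omega), zero_mul]
      · intro hn1
        rw [hstep]
        set w := (M ^ n).mulVec v with hw
        set j : Fin d := ⟨d - 1 - (n + 1), by omega⟩ with hj
        set p : Fin d := ⟨d - 1 - n, by omega⟩ with hp
        have hjp : (p : ℕ) = (j : ℕ) + 1 := by simp [hj, hp]; omega
        have : M.mulVec w j = ∑ k, M j k * w k := rfl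
        rw [this, Finset.sum_eq_single p]
        · exact mul_ne_zero (hM1 j p hjp) (ih.2 (by omega))
        · intro k _ hk
          by_cases hkd : (k : ℕ) + n + 1 < d
          · rw [ih.1 k hkd, mul_zero]
          · have : (j : ℕ) + 1 < (k : ℕ) := by
              have : (k : ℕ) ≠ (p : ℕ) := fun h => hk (Fin.ext h)
              simp only [hj, hp] at *
              omega
            rw [hM2 j k this, zero_mul]
        · intro h; exact absurd (Finset.mem_univ p) h
  -- the triangular basis matrix
  set B : Matrix (Fin d) (Fin d) ℂ :=
    Matrix.of fun j k : Fin d => ((M ^ (d - 1 - (k : ℕ))).mulVec v) j with hB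
  have hBtri : B.BlockTriangular OrderDual.toDual := by
    intro j k hjk
    have hjk' : (j : ℕ) < (k : ℕ) := OrderDual.toDual_lt_toDual.mp hjk
    simp only [hB, Matrix.of_apply]
    exact (key (d - 1 - (k : ℕ))).1 j (by omega)
  have hBdiag : ∀ k : Fin d, B k k ≠ 0 := by
    intro k
    have h := (key (d - 1 - (k : ℕ))).2 (by omega)
    have hk : (⟨d - 1 - (d - 1 - (k : ℕ)), by omega⟩ : Fin d) = k := by
      apply Fin.ext; simp; omega
    rw [hk] at h
    exact h
  have hBdet : B.det ≠ 0 := by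
    rw [Matrix.det_of_lowerTriangular B hBtri]
    exact Finset.prod_ne_zero_iff.mpr fun k _ => hBdiag k
  have hAB : A * B = B := by
    ext j k
    have h := congrFun (hfix (d - 1 - (k : ℕ))) j
    simpa [Matrix.mul_apply, Matrix.mulVec, dotProduct, hB] using h
  have hBinv : B * B⁻¹ = 1 := Matrix.mul_nonsing_inv B (isUnit_iff_ne_zero.mpr hBdet)
  calc A = A * (B * B⁻¹) := by rw [hBinv, mul_one]
  _ = (A * B) * B⁻¹ := by rw [mul_assoc]
  _ = 1 := by rw [hAB, hBinv]
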